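/- arXiv:1909.03096 — 3 statements merged into one kernel-verified Lean document; each statement's English description precedes it below -/
import Mathlib

section
/- Let n ≥ 2 and let F : ℝⁿ → ℝ be positively 1-homogeneous, positive on nonzero vectors, and continuously differentiable on ℝⁿ \ {0}. If v ∈ ℝⁿ is nonzero and is NOT a vertical contact point of F and the Euclidean norm, then the n torsion-type tensors σ₁(v), …, σₙ(v), where σᵢ(v) has components σ_{c;i}^{ab}(v) for a < b, are linearly independent in the n·binom(n,2)-dimensional space of torsion-type tensors; equivalently, the matrix with rows indexed by i and columns indexed by triples (a,b,c) with a<b, whose entries are σ_{c;i}^{ab}(v), has rank n. -/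
/-- The `r`-th partial derivative of `F` at `v`. -/
noncomputable def pd {n : ℕ} (F : EuclideanSpace ℝ (Fin n) → ℝ)
    (v : EuclideanSpace ℝ (Fin n)) (r : Fin n) : ℝ :=
  fderiv ℝ F v (EuclideanSpace.single r 1)

/-- The coefficient `σ_{c;i}^{ab}(v)` (with respect to an orthonormal basis).
The tensor `σᵢ(v)` is the torsion-type tensor whose `(a,b,c)` component is
`sigmaT F v a b c i`; it is antisymmetric in `a, b`. -/
noncomputable def sigmaT {n : ℕ} (F : EuclideanSpace ℝ (Fin n) → ℝ)
    (v : EuclideanSpace ℝ (Fin n)) (a b c i : Fin n) : ℝ :=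
  (1 / 2) * ((if i = c then (1 : ℝ) else 0) * (v a * pd F v b - v b * pd F v a)
    + (if i = a then (1 : ℝ) else 0) * (v c * pd F v b - v b * pd F v c)
    - (if i = b then (1 : ℝ) else 0) * (v c * pd F v a - v a * pd F v c))

/-- If the nonzero `v` is not a vertical contact point of `F` and the Euclidean norm,
then the torsion-type tensors `σ₁(v), …, σₙ(v)` are linearly independent (equivalently,
the matrix of coefficients `σ_{c;i}^{ab}(v)` has rank `n`). -/
theorem sigma_linearIndependent {n : ℕ} (hn : 2 ≤ n)
    (F : EuclideanSpace ℝ (Fin n) → ℝ)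
    (hhom : ∀ t : ℝ, 0 < t → ∀ v, F (t • v) = t * F v)
    (hpos : ∀ v : EuclideanSpace ℝ (Fin n), v ≠ 0 → 0 < F v)
    (hdiff : ContDiffOn ℝ 1 F {(0 : EuclideanSpace ℝ (Fin n))}ᶜ)
    (v : EuclideanSpace ℝ (Fin n)) (hv : v ≠ 0)
    (hnvc : ¬ ∀ r, pd F v r = (F v / ‖v‖ ^ 2) * v r) :
    LinearIndependent ℝ
      (fun i : Fin n => (fun a b c => sigmaT F v a b c i : Fin n → Fin n → Fin n → ℝ)) := by
  classical
  set w : Fin n → ℝ := pd F v with hwdef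
  -- differentiability at v
  have hdiffv : DifferentiableAt ℝ F v :=
    (hdiff.differentiableOn one_ne_zero).differentiableAt
      (isOpen_compl_singleton.mem_nhds hv)
  -- Euler: fderiv F v v = F v
  have hEuler : fderiv ℝ F v v = F v := by
    have hs : HasDerivAt (fun t : ℝ => t • v) v 1 := by
      simpa using (hasDerivAt_id (1:ℝ)).smul_const v
    have h1 : HasDerivAt (fun t : ℝ => F (t • v)) (fderiv ℝ F v v) 1 := by
      have hF : HasFDerivAt F (fderiv ℝ F v) ((1:ℝ) • v) := by
        rw [one_smul]; exact hdiffv.hasFDerivAt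
      exact hF.comp_hasDerivAt 1 hs
    have h2 : HasDerivAt (fun t : ℝ => F (t • v)) (F v) 1 := by
      have h2' : HasDerivAt (fun t : ℝ => t * F v) (F v) 1 := by
        simpa using (hasDerivAt_id (1:ℝ)).mul_const (F v)
      apply h2'.congr_of_eventuallyEq
      filter_upwards [eventually_gt_nhds (one_pos)] with t ht
      exact hhom t ht v
    exact h1.unique h2
  -- linear expansion
  have hv_sum : (fderiv ℝ F v) v = ∑ r, v r * w r := by
    have hv' : v = ∑ r, v r • EuclideanSpace.single r (1:ℝ) := by
      have := (EuclideanSpace.basisFun (Fin n) ℝ).sum_repr v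
      simp only [EuclideanSpace.basisFun_repr, EuclideanSpace.basisFun_apply] at this
      exact this.symm
    calc (fderiv ℝ F v) v = (fderiv ℝ F v) (∑ r, v r • EuclideanSpace.single r (1:ℝ)) := by
          rw [← hv']
      _ = ∑ r, v r * w r := by rw [map_sum]; simp [pd, hwdef, smul_eq_mul]
  have hsum : ∑ r, v r * w r = F v := by rw [← hv_sum, hEuler]
  have hnorm : ‖v‖ ^ 2 = ∑ i, v i ^ 2 := by
    rw [EuclideanSpace.norm_eq, Real.sq_sqrt (by positivity)]
    simp [sq_abs]
  have hnormpos : (0:ℝ) < ‖v‖ ^ 2 := pow_pos (norm_pos_iff.mpr hv) 2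
  -- B nonzero
  have hB : ∃ a b, v a * w b - v b * w a ≠ 0 := by
    by_contra h
    push_neg at h
    apply hnvc
    intro r
    have key : ‖v‖ ^ 2 * w r = F v * v r := by
      rw [hnorm]
      calc (∑ i, v i ^ 2) * w r = ∑ i, v i * (v i * w r) := by
            rw [Finset.sum_mul]; congr 1; ext i; ring
        _ = ∑ i, v i * (v r * w i) := by
            congr 1; ext i
            rw [show v i * w r = v r * w i from by linarith [h i r]]
        _ = (∑ i, v i * w i) * v r := by rw [Finset.sum_mul]; congr 1; ext i; ring
        _ = F v * v r := by rw [hsum]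
    have := hnormpos.ne'
    field_simp
    linarith [key]
  obtain ⟨a, b, hab⟩ := hB
  -- linear independence
  rw [Fintype.linearIndependent_iff]
  intro g hg
  have E : ∀ a' b' c' : Fin n,
      g c' * (v a' * w b' - v b' * w a') + g a' * (v c' * w b' - v b' * w c')
        - g b' * (v c' * w a' - v a' * w c') = 0 := by
    intro a' b' c'
    have h0 := congrFun (congrFun (congrFun hg a') b') c'
    simp only [Finset.sum_apply, Pi.smul_apply, smul_eq_mul, Pi.zero_apply] at h0
    have hrw : ∀ i, g i * sigmaT F v a' b' c' i =
        (1/2) * ((if i = c' then g i * (v a' * w b' - v b' * w a') else 0)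
          + (if i = a' then g i * (v c' * w b' - v b' * w c') else 0)
          - (if i = b' then g i * (v c' * w a' - v a' * w c') else 0)) := by
      intro i
      simp only [sigmaT, hwdef]
      split_ifs <;> ring
    rw [Finset.sum_congr rfl (fun i _ => hrw i), ← Finset.mul_sum] at h0
    rw [Finset.sum_sub_distrib, Finset.sum_add_distrib] at h0
    simp only [Finset.sum_ite_eq', Finset.mem_univ, if_true] at h0
    linarith
  have hga : g a = 0 := by
    rcases mul_eq_zero.mp (show g a * ((v a * w b - v b * w a) * 2) = 0 by
        linear_combination E a b a) with h | h
    · exact h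
    · exact absurd (by linarith : v a * w b - v b * w a = 0) hab
  have hgb : g b = 0 := by
    rcases mul_eq_zero.mp (show g b * ((v a * w b - v b * w a) * 2) = 0 by
        linear_combination E a b b) with h | h
    · exact h
    · exact absurd (by linarith : v a * w b - v b * w a = 0) hab
  intro i
  rcases mul_eq_zero.mp (show g i * (v a * w b - v b * w a) = 0 by
      linear_combination E a b i - (v i * w b - v b * w i) * hga
        + (v i * w a - v a * w i) * hgb) with h | h
  · exact h
  · exact absurd h hab
end

section
/- Let F : ℝⁿ × ℝⁿ → ℝ (written F(x,y)) be continuously differentiable at all points (x,y) with y ≠ 0, and let Γ : ℝⁿ → ℝ^{n×n×n} be a continuous family of connection coefficients. Then the following are equivalent: (i) for every continuously differentiable curve c : [0,1] → ℝⁿ and every continuously differentiable, nowhere-vanishing vector field X : [0,1] → ℝⁿ along c that is parallel, i.e. (Xᵏ)'(t) = −Σ_{i,j} (cⁱ)'(t)·Xʲ(t)·Γᵏᵢⱼ(c(t)) for all t, the function t ↦ F(c(t), X(t)) is constant on [0,1]; (ii) for all x ∈ ℝⁿ, all y ≠ 0, and all i = 1,…,n: ∂F/∂xⁱ(x,y)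 − Σ_{j,k} yʲ·Γᵏᵢⱼ(x)·∂F/∂yᵏ(x,y) = 0. -/
open Finset

/-- The partial derivative `∂F/∂xⁱ(x,y)` of `F : ℝⁿ × ℝⁿ → ℝ`. -/
noncomputable def pdx {n : ℕ} (F : (Fin n → ℝ) × (Fin n → ℝ) → ℝ)
    (x y : Fin n → ℝ) (i : Fin n) : ℝ :=
  fderiv ℝ F (x, y) (Pi.single i 1, 0)

/-- The partial derivative `∂F/∂yᵏ(x,y)` of `F : ℝⁿ × ℝⁿ → ℝ`. -/
noncomputable def pdy {n : ℕ} (F : (Fin n → ℝ) × (Fin n → ℝ) → ℝ)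
    (x y : Fin n → ℝ) (k : Fin n) : ℝ :=
  fderiv ℝ F (x, y) (0, Pi.single k 1)

open Set NNReal


noncomputable def chi (t : ℝ) : ℝ := min 1 (max 0 (2*t+1)) * min 1 (max 0 (3-2*t))

theorem chi_cont : Continuous chi := by
  unfold chi
  fun_prop

theorem chi_one {t : ℝ} (h0 : 0 ≤ t) (h1 : t ≤ 1) : chi t = 1 := by
  unfold chi
  rw [max_eq_right (by linarith), max_eq_right (by linarith),
    min_eq_left (by linarith), min_eq_left (by linarith), one_mul]

theorem chi_zero_left {t : ℝ} (h : t ≤ -1/2) : chi t = 0 := by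
  unfold chi
  rw [max_eq_left (by linarith), min_eq_right (by linarith), zero_mul]

theorem chi_zero_right {t : ℝ} (h : 3/2 ≤ t) : chi t = 0 := by
  unfold chi
  rw [show max 0 (3-2*t) = 0 from max_eq_left (by linarith), min_eq_right zero_le_one, mul_zero]

theorem chi_nonneg (t : ℝ) : 0 ≤ chi t := by
  unfold chi
  have h1 : (0:ℝ) ≤ min 1 (max 0 (2*t+1)) := le_min zero_le_one (le_max_left _ _)
  have h2 : (0:ℝ) ≤ min 1 (max 0 (3-2*t)) := le_min zero_le_one (le_max_left _ _)
  positivity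

theorem chi_le_one (t : ℝ) : chi t ≤ 1 := by
  unfold chi
  have h1 : min 1 (max 0 (2*t+1)) ≤ 1 := min_le_left _ _
  have h2 : min 1 (max 0 (3-2*t)) ≤ 1 := min_le_left _ _
  have h1' : (0:ℝ) ≤ min 1 (max 0 (2*t+1)) := le_min zero_le_one (le_max_left _ _)
  nlinarith


structure IsPicardLindelofOld {E : Type*} [NormedAddCommGroup E] (v : ℝ → E → E)
    (tMin t₀ tMax : ℝ) (x₀ : E) (L : ℝ≥0) (R C : ℝ) : Prop where
  ht₀ : t₀ ∈ Icc tMin tMax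
  hR : 0 ≤ R
  lipschitz : ∀ t ∈ Icc tMin tMax, LipschitzOnWith L (v t) (Metric.closedBall x₀ R)
  cont : ∀ x ∈ Metric.closedBall x₀ R, ContinuousOn (fun t : ℝ => v t x) (Icc tMin tMax)
  norm_le : ∀ t ∈ Icc tMin tMax, ∀ x ∈ Metric.closedBall x₀ R, ‖v t x‖ ≤ C
  C_mul_le_R : (C : ℝ) * max (tMax - t₀) (t₀ - tMin) ≤ R

theorem pl_exists_mem {E : Type*} [NormedAddCommGroup E] [NormedSpace ℝ E] [CompleteSpace E]
    {v : ℝ → E → E} {tMin t₀ tMax : ℝ} (x₀ : E) {C R : ℝ} {L : ℝ≥0}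
    (hpl : IsPicardLindelofOld v tMin t₀ tMax x₀ L R C) :
    ∃ f : ℝ → E, f t₀ = x₀ ∧ (∀ t ∈ Icc tMin tMax, f t ∈ Metric.closedBall x₀ R) ∧
      ∀ t ∈ Icc tMin tMax, HasDerivWithinAt f (v t (f t)) (Icc tMin tMax) t := by
  have hC : 0 ≤ C := (norm_nonneg _).trans
    (hpl.norm_le t₀ hpl.ht₀ x₀ (Metric.mem_closedBall_self hpl.hR))
  have hf : IsPicardLindelof v (⟨t₀, hpl.ht₀⟩ : Icc tMin tMax) x₀ (NNReal.mk R hpl.hR) 0 (NNReal.mk C hC) L :=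
    { lipschitzOnWith := hpl.lipschitz, continuousOn := hpl.cont, norm_le := hpl.norm_le,
      mul_max_le := by simpa using hpl.C_mul_le_R }
  obtain ⟨α, hα⟩ := ODE.FunSpace.exists_isFixedPt_next hf (Metric.mem_closedBall_self le_rfl)
  refine ⟨α.compProj, ?_, fun t _ => α.compProj_mem_closedBall hf.mul_max_le, fun t ht => ?_⟩
  · rw [α.compProj_of_mem hpl.ht₀]
    exact ODE.FunSpace.apply_of_zero α
  · apply ODE.hasDerivWithinAt_picard_Icc hpl.ht₀ hf.continuousOn_uncurry
      α.continuous_compProj.continuousOn (fun _ ht' ↦ α.compProj_mem_closedBall hf.mul_max_le)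
      x₀ ht |>.congr_of_mem _ ht
    intro t' ht'
    nth_rw 1 [← hα]
    rw [ODE.FunSpace.compProj_of_mem ht', ODE.FunSpace.next_apply]


theorem clm_expand {n : ℕ} (L : ((Fin n → ℝ) × (Fin n → ℝ)) →L[ℝ] ℝ) (a b : Fin n → ℝ) :
    L (a, b) = ∑ i, a i * L (Pi.single i 1, 0) + ∑ k, b k * L (0, Pi.single k 1) := by
  have h : (a, b) = (∑ i, a i • ((Pi.single i 1 : Fin n → ℝ), (0 : Fin n → ℝ)))
      + ∑ k, b k • ((0 : Fin n → ℝ), (Pi.single k 1 : Fin n → ℝ)) := by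
    rw [Prod.ext_iff]
    constructor <;>
    · simp only [Prod.fst_sum, Prod.snd_sum, Prod.smul_mk, Prod.fst_add, Prod.snd_add]
      funext j
      simp [Finset.sum_apply, Pi.single_apply, mul_ite]
  rw [h, map_add, map_sum, map_sum]
  congr 1 <;> exact Finset.sum_congr rfl fun i _ => by rw [map_smul]; rfl

theorem hasDerivAt_comp_F {n : ℕ} (F : (Fin n → ℝ) × (Fin n → ℝ) → ℝ)
    (hF : ContDiffOn ℝ 1 F {p : (Fin n → ℝ) × (Fin n → ℝ) | p.2 ≠ 0})
    (c X : ℝ → Fin n → ℝ) (t : ℝ) (cd Xd : Fin n → ℝ)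
    (hc : HasDerivAt c cd t) (hX : HasDerivAt X Xd t) (hne : X t ≠ 0) :
    HasDerivAt (fun s => F (c s, X s)) (fderiv ℝ F (c t, X t) (cd, Xd)) t := by
  have hopen : IsOpen {p : (Fin n → ℝ) × (Fin n → ℝ) | p.2 ≠ 0} :=
    isOpen_ne_fun continuous_snd continuous_const
  have hmem : ((c t, X t) : (Fin n → ℝ) × (Fin n → ℝ)) ∈ {p : (Fin n → ℝ) × (Fin n → ℝ) | p.2 ≠ 0} := hne
  have hdF : DifferentiableAt ℝ F (c t, X t) :=
    (hF.contDiffAt (hopen.mem_nhds hmem)).differentiableAt one_ne_zero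
  exact (hdF.hasFDerivAt.comp_hasDerivAt t (hc.prodMk hX))

theorem alg_aux {n : ℕ} (A P Q Y : Fin n → ℝ) (G : Fin n → Fin n → Fin n → ℝ)
    (h : ∀ i, P i = ∑ j, ∑ k, Y j * G i j k * Q k) :
    ∑ i, A i * P i + ∑ k, (-∑ i, ∑ j, A i * Y j * G i j k) * Q k = 0 := by
  have h2 : ∑ k, (-∑ i, ∑ j, A i * Y j * G i j k) * Q k
      = -∑ i, A i * ∑ j, ∑ k, Y j * G i j k * Q k := by
    simp only [neg_mul, Finset.sum_neg_distrib, Finset.sum_mul, Finset.mul_sum, neg_inj]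
    rw [Finset.sum_comm]
    refine Finset.sum_congr rfl fun i _ => ?_
    rw [Finset.sum_comm]
    exact Finset.sum_congr rfl fun j _ => Finset.sum_congr rfl fun k _ => by ring
  rw [h2]
  simp only [h]
  ring

theorem easy_dir {n : ℕ} (F : (Fin n → ℝ) × (Fin n → ℝ) → ℝ)
    (hF : ContDiffOn ℝ 1 F {p : (Fin n → ℝ) × (Fin n → ℝ) | p.2 ≠ 0})
    (Γ : (Fin n → ℝ) → Fin n → Fin n → Fin n → ℝ)
    (hcomp : ∀ x y : Fin n → ℝ, y ≠ 0 → ∀ i,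
        pdx F x y i - ∑ j, ∑ k, y j * Γ x i j k * pdy F x y k = 0) :
    ∀ c X : ℝ → Fin n → ℝ, ContDiff ℝ 1 c → ContDiff ℝ 1 X →
        (∀ t ∈ Set.Icc (0 : ℝ) 1, X t ≠ 0) →
        (∀ t ∈ Set.Icc (0 : ℝ) 1, ∀ k, deriv (fun s => X s k) t =
          - ∑ i, ∑ j, deriv (fun s => c s i) t * X t j * Γ (c t) i j k) →
        ∀ s ∈ Set.Icc (0 : ℝ) 1, ∀ t ∈ Set.Icc (0 : ℝ) 1, F (c s, X s) = F (c t, X t) := by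
  intro c X hc hX hne hpar s hs t ht
  have key : ∀ u ∈ Set.Icc (0:ℝ) 1, HasDerivAt (fun r => F (c r, X r)) 0 u := by
    intro u hu
    have hc' : HasDerivAt c (deriv c u) u := (hc.differentiable one_ne_zero u).hasDerivAt
    have hX' : HasDerivAt X (deriv X u) u := (hX.differentiable one_ne_zero u).hasDerivAt
    have H := hasDerivAt_comp_F F hF c X u (deriv c u) (deriv X u) hc' hX' (hne u hu)
    have hci : ∀ i, deriv (fun s => c s i) u = deriv c u i := fun i =>
      (hasDerivAt_pi.mp hc' i).deriv
    have hXk : ∀ k, deriv (fun s => X s k) u = deriv X u k := fun k =>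
      (hasDerivAt_pi.mp hX' k).deriv
    have hval : (fderiv ℝ F (c u, X u)) (deriv c u, deriv X u) = 0 := by
      rw [clm_expand]
      have hsub : ∀ k, deriv X u k =
          -∑ i, ∑ j, deriv c u i * X u j * Γ (c u) i j k := by
        intro k
        rw [← hXk k, hpar u hu k]
        congr 1
        exact Finset.sum_congr rfl fun i _ => by rw [hci i]
      calc ∑ i, deriv c u i * (fderiv ℝ F (c u, X u)) (Pi.single i 1, 0)
            + ∑ k, deriv X u k * (fderiv ℝ F (c u, X u)) (0, Pi.single k 1)
          = ∑ i, deriv c u i * pdx F (c u) (X u) i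
            + ∑ k, (-∑ i, ∑ j, deriv c u i * X u j * Γ (c u) i j k) * pdy F (c u) (X u) k := by
            congr 1
            exact Finset.sum_congr rfl fun k _ => by rw [hsub k]; rfl
        _ = 0 := by
            refine alg_aux _ _ _ _ _ fun i => ?_
            have := hcomp (c u) (X u) (hne u hu) i
            linarith [this]
    rw [← hval]
    exact H
  have hconst : ∀ u ∈ Set.Icc (0:ℝ) 1, F (c u, X u) = F (c 0, X 0) := by
    intro u hu
    have := constant_of_has_deriv_right_zero
      (f := fun r => F (c r, X r)) (a := 0) (b := 1)
      (fun r hr => ((key r hr).continuousAt.continuousWithinAt))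
      (fun r hr => ((key r (Set.mem_Icc.mpr ⟨hr.1, hr.2.le⟩)).hasDerivWithinAt))
    exact this u hu
  rw [hconst s hs, hconst t ht]

theorem hard_dir {n : ℕ}
    (F : (Fin n → ℝ) × (Fin n → ℝ) → ℝ)
    (hF : ContDiffOn ℝ 1 F {p : (Fin n → ℝ) × (Fin n → ℝ) | p.2 ≠ 0})
    (Γ : (Fin n → ℝ) → Fin n → Fin n → Fin n → ℝ)
    (hΓ : Continuous Γ)
    (hpres : ∀ c X : ℝ → Fin n → ℝ, ContDiff ℝ 1 c → ContDiff ℝ 1 X →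
        (∀ t ∈ Set.Icc (0 : ℝ) 1, X t ≠ 0) →
        (∀ t ∈ Set.Icc (0 : ℝ) 1, ∀ k, deriv (fun s => X s k) t =
          - ∑ i, ∑ j, deriv (fun s => c s i) t * X t j * Γ (c t) i j k) →
        ∀ s ∈ Set.Icc (0 : ℝ) 1, ∀ t ∈ Set.Icc (0 : ℝ) 1, F (c s, X s) = F (c t, X t)) :
    ∀ x y : Fin n → ℝ, y ≠ 0 → ∀ i,
        pdx F x y i - ∑ j, ∑ k, y j * Γ x i j k * pdy F x y k = 0 := by
  intro x y hy i₀
  set e : Fin n → ℝ := Pi.single i₀ (1:ℝ) with he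
  have hy' : (0:ℝ) < ‖y‖ := norm_pos_iff.mpr hy
  set R : ℝ := ‖y‖ / 2 with hRdef
  have hR : 0 < R := by positivity
  -- bound on Γ over the segment
  obtain ⟨M, hM0, hGb⟩ : ∃ M : ℝ, 0 ≤ M ∧
      ∀ s ∈ Icc (-2:ℝ) 2, ∀ i j k, |Γ (x + s • e) i j k| ≤ M := by
    have hcont : Continuous fun s : ℝ => Γ (x + s • e) :=
      hΓ.comp (continuous_const.add (continuous_id.smul continuous_const))
    obtain ⟨M, hM⟩ := (isCompact_Icc (a := (-2:ℝ)) (b := 2)).exists_bound_of_continuousOn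
      hcont.continuousOn
    refine ⟨M, le_trans (norm_nonneg _) (hM 0 (by norm_num)), fun s hs i j k => ?_⟩
    calc |Γ (x + s • e) i j k| = ‖Γ (x + s • e) i j k‖ := rfl
      _ ≤ ‖Γ (x + s • e) i j‖ := norm_le_pi_norm _ k
      _ ≤ ‖Γ (x + s • e) i‖ := norm_le_pi_norm _ j
      _ ≤ ‖Γ (x + s • e)‖ := norm_le_pi_norm _ i
      _ ≤ M := hM s hs
  set B : ℝ := (n:ℝ) * M + 1 with hBdef
  have hB : 0 < B := by positivity
  set ε : ℝ := min 1 (R / (2 * B * (‖y‖ + R))) with hεdef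
  have hε0 : 0 < ε := lt_min one_pos (by positivity)
  have hε1 : ε ≤ 1 := min_le_left _ _
  have hεR : ε * B * (‖y‖ + R) * 2 ≤ R := by
    have h2 : ε ≤ R / (2 * B * (‖y‖ + R)) := min_le_right _ _
    rw [le_div_iff₀ (by positivity)] at h2
    nlinarith
  set c : ℝ → Fin n → ℝ := fun s => x + (ε * s) • e with hcdef
  set v : ℝ → (Fin n → ℝ) → (Fin n → ℝ) :=
    fun t z => fun k => -((chi t * ε) * ∑ j, z j * Γ (c t) i₀ j k) with hvdef
  have hseg : ∀ t ∈ Icc (-1:ℝ) 2, ε * t ∈ Icc (-2:ℝ) 2 := by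
    intro t ht
    constructor <;> nlinarith [ht.1, ht.2]
  -- linear bound on v
  have hvb : ∀ t ∈ Icc (-1:ℝ) 2, ∀ u : Fin n → ℝ, ‖v t u‖ ≤ ε * B * ‖u‖ := by
    intro t ht u
    refine (pi_norm_le_iff_of_nonneg (by positivity)).mpr fun k => ?_
    have hsum : |∑ j, u j * Γ (c t) i₀ j k| ≤ (n : ℝ) * (‖u‖ * M) := by
      refine (Finset.abs_sum_le_sum_abs _ _).trans ?_
      have : ∀ j : Fin n, |u j * Γ (c t) i₀ j k| ≤ ‖u‖ * M := by
        intro j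
        rw [abs_mul]
        exact mul_le_mul (norm_le_pi_norm u j) (hGb (ε * t) (hseg t ht) i₀ j k)
          (abs_nonneg _) (norm_nonneg _)
      calc ∑ j, |u j * Γ (c t) i₀ j k| ≤ ∑ _j : Fin n, ‖u‖ * M :=
            Finset.sum_le_sum fun j _ => this j
        _ = (n : ℝ) * (‖u‖ * M) := by simp [Finset.sum_const, mul_comm]
    have habs : ‖v t u k‖ = (chi t * ε) * |∑ j, u j * Γ (c t) i₀ j k| := by
      simp only [hvdef, Real.norm_eq_abs]
      rw [abs_neg, abs_mul, abs_of_nonneg (mul_nonneg (chi_nonneg t) hε0.le)]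
    rw [habs]
    have h1 := chi_le_one t
    have h2 := chi_nonneg t
    have h3 : (0:ℝ) ≤ (n:ℝ) := Nat.cast_nonneg n
    have h4 := norm_nonneg u
    calc (chi t * ε) * |∑ j, u j * Γ (c t) i₀ j k|
        ≤ (1 * ε) * |∑ j, u j * Γ (c t) i₀ j k| :=
          mul_le_mul_of_nonneg_right (mul_le_mul_of_nonneg_right h1 hε0.le) (abs_nonneg _)
      _ = ε * |∑ j, u j * Γ (c t) i₀ j k| := by ring
      _ ≤ ε * ((n:ℝ) * (‖u‖ * M)) := mul_le_mul_of_nonneg_left hsum hε0.le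
      _ ≤ ε * (B * ‖u‖) := by
          refine mul_le_mul_of_nonneg_left ?_ hε0.le
          rw [hBdef]
          nlinarith
      _ = ε * B * ‖u‖ := by ring
  have hvlin : ∀ t, ∀ z w : Fin n → ℝ, v t z - v t w = v t (z - w) := by
    intro t z w
    funext k
    simp only [hvdef, Pi.sub_apply, sub_mul, Finset.sum_sub_distrib, mul_sub]
    ring
  set C : ℝ := ε * B * (‖y‖ + R) with hCdef
  have hpl : IsPicardLindelofOld v (-1) 0 2 y (⟨ε * B, by positivity⟩ : ℝ≥0) R C := by
    refine ⟨by norm_num, hR.le, ?_, ?_, ?_, ?_⟩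
    · intro t ht
      refine LipschitzOnWith.of_dist_le_mul fun z _ w _ => ?_
      rw [dist_eq_norm, dist_eq_norm, hvlin t z w]
      exact (hvb t ht (z - w)).trans_eq rfl
    · intro z _
      refine Continuous.continuousOn ?_
      refine continuous_pi fun k => ?_
      refine Continuous.neg ?_
      refine ((chi_cont.mul continuous_const).mul ?_)
      refine continuous_finset_sum _ fun j _ => ?_
      refine continuous_const.mul ?_
      have hcc : Continuous c := by
        rw [hcdef]
        exact continuous_const.add ((continuous_const.mul continuous_id).smul continuous_const)
      exact (continuous_apply k).comp (((continuous_apply j).comp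
        ((continuous_apply i₀).comp (hΓ.comp hcc))))
    · intro t ht z hz
      have hz' : ‖z‖ ≤ ‖y‖ + R := by
        have h1 : ‖z - y‖ ≤ R := mem_closedBall_iff_norm.mp hz
        calc ‖z‖ = ‖z - y + y‖ := by ring_nf
          _ ≤ ‖z - y‖ + ‖y‖ := norm_add_le _ _
          _ ≤ ‖y‖ + R := by linarith
      calc ‖v t z‖ ≤ ε * B * ‖z‖ := hvb t ht z
        _ ≤ ε * B * (‖y‖ + R) := mul_le_mul_of_nonneg_left hz' (by positivity)
    · have : max ((2:ℝ) - 0) (0 - (-1)) = 2 := by norm_num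
      rw [this]
      exact hεR
  obtain ⟨f, hf0, hfball, hfderiv⟩ := pl_exists_mem y hpl
  set π : ℝ → ℝ := fun t => max (-1) (min t 2) with hπdef
  set g : ℝ → Fin n → ℝ := fun t => f (π t) with hgdef
  have hπ_mem : ∀ t, π t ∈ Icc (-1:ℝ) 2 := fun t =>
    ⟨le_max_left _ _, max_le (by norm_num) (min_le_right _ _)⟩
  have hπ_eq : ∀ t ∈ Icc (-1:ℝ) 2, π t = t := fun t ht => by
    simp only [hπdef]; rw [min_eq_left ht.2, max_eq_right ht.1]
  have hgf : ∀ t ∈ Icc (-1:ℝ) 2, g t = f t := fun t ht => by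
    simp only [hgdef]; rw [hπ_eq t ht]
  -- flat ends
  have hflatL : ∀ t ∈ Icc (-1:ℝ) (-1/2), f t = f (-1/2) := by
    have hkey : ∀ r ∈ Ico (-1:ℝ) (-1/2), HasDerivWithinAt f 0 (Ici r) r := by
      intro r hr
      have hmem : r ∈ Icc (-1:ℝ) 2 := ⟨hr.1, by linarith [hr.2]⟩
      have h1 := hfderiv r hmem
      have hv0 : v r (f r) = 0 := by
        funext k
        simp only [hvdef, Pi.zero_apply]
        rw [chi_zero_left (le_of_lt hr.2)]
        ring
      rw [hv0] at h1
      refine h1.mono_of_mem_nhdsWithin ?_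
      rw [mem_nhdsWithin]
      exact ⟨Iio 2, isOpen_Iio, Set.mem_Iio.mpr (by linarith [hr.2]),
        fun u hu => ⟨le_trans hmem.1 hu.2, le_of_lt hu.1⟩⟩
    have hcont : ContinuousOn f (Icc (-1:ℝ) (-1/2)) := fun r hr =>
      ((hfderiv r ⟨hr.1, by linarith [hr.2]⟩).continuousWithinAt).mono
        (Icc_subset_Icc le_rfl (by norm_num))
    intro t ht
    rw [constant_of_has_deriv_right_zero hcont hkey t ht,
      constant_of_has_deriv_right_zero hcont hkey (-1/2) (right_mem_Icc.mpr (by norm_num))]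
  have hflatR : ∀ t ∈ Icc (3/2:ℝ) 2, f t = f (3/2) := by
    have hkey : ∀ r ∈ Ico (3/2:ℝ) 2, HasDerivWithinAt f 0 (Ici r) r := by
      intro r hr
      have hmem : r ∈ Icc (-1:ℝ) 2 := ⟨by linarith [hr.1], hr.2.le⟩
      have h1 := hfderiv r hmem
      have hv0 : v r (f r) = 0 := by
        funext k
        simp only [hvdef, Pi.zero_apply]
        rw [chi_zero_right hr.1]
        ring
      rw [hv0] at h1
      refine h1.mono_of_mem_nhdsWithin ?_
      rw [mem_nhdsWithin]
      exact ⟨Iio 2, isOpen_Iio, Set.mem_Iio.mpr hr.2,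
        fun u hu => ⟨le_trans hmem.1 hu.2, le_of_lt hu.1⟩⟩
    have hcont : ContinuousOn f (Icc (3/2:ℝ) 2) := fun r hr =>
      ((hfderiv r ⟨by linarith [hr.1], hr.2⟩).continuousWithinAt).mono
        (Icc_subset_Icc (by norm_num) le_rfl)
    intro t ht
    exact constant_of_has_deriv_right_zero hcont hkey t ht
  have hgL : ∀ t ≤ (-1/2:ℝ), g t = f (-1/2) := by
    intro t ht
    by_cases h : t ≤ -1
    · have hπt : π t = -1 := by
        simp only [hπdef]
        rw [min_eq_left (by linarith : t ≤ 2), max_eq_left h]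
      simp only [hgdef, hπt]
      exact hflatL (-1) (left_mem_Icc.mpr (by norm_num))
    · push_neg at h
      have hm : t ∈ Icc (-1:ℝ) 2 := ⟨h.le, by linarith⟩
      rw [hgf t hm]
      exact hflatL t ⟨h.le, ht⟩
  have hgR : ∀ t, (3/2:ℝ) ≤ t → g t = f (3/2) := by
    intro t ht
    by_cases h : t ≤ 2
    · have hm : t ∈ Icc (-1:ℝ) 2 := ⟨by linarith, h⟩
      rw [hgf t hm]
      exact hflatR t ⟨ht, h⟩
    · push_neg at h
      have hπt : π t = 2 := by
        simp only [hπdef]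
        rw [min_eq_right h.le, max_eq_right (by norm_num : (-1:ℝ) ≤ 2)]
      simp only [hgdef, hπt]
      exact hflatR 2 (right_mem_Icc.mpr (by norm_num))
  set w : ℝ → Fin n → ℝ := fun t => v (π t) (g t) with hwdef
  have hgd : ∀ t, HasDerivAt g (w t) t := by
    intro t
    rcases lt_or_ge t (-1/2) with h | h
    · have hev : g =ᶠ[nhds t] fun _ => f (-1/2) := by
        filter_upwards [Iio_mem_nhds h] with u hu using hgL u (le_of_lt hu)
      have h0 : HasDerivAt g 0 t :=
        (hasDerivAt_const t (f (-1/2))).congr_of_eventuallyEq hev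
      have hwt : w t = 0 := by
        have hπt : π t ≤ -1/2 := by
          simp only [hπdef]
          exact max_le (by norm_num) (le_trans (min_le_left _ _) h.le)
        funext k
        simp only [hwdef, hvdef, Pi.zero_apply]
        rw [chi_zero_left hπt]
        ring
      rw [hwt]
      exact h0
    rcases le_or_gt t (3/2) with h2 | h2
    · have hio : t ∈ Ioo (-1:ℝ) 2 := ⟨by linarith, by linarith⟩
      have hf' : HasDerivAt f (v t (f t)) t :=
        (hfderiv t (Ioo_subset_Icc_self hio)).hasDerivAt (Icc_mem_nhds hio.1 hio.2)
      have hev : g =ᶠ[nhds t] f := by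
        filter_upwards [Ioo_mem_nhds hio.1 hio.2] with u hu using
          hgf u (Ioo_subset_Icc_self hu)
      have h0 : HasDerivAt g (v t (f t)) t := hf'.congr_of_eventuallyEq hev
      have hwt : w t = v t (f t) := by
        simp only [hwdef]
        rw [hπ_eq t (Ioo_subset_Icc_self hio), hgf t (Ioo_subset_Icc_self hio)]
      rw [hwt]
      exact h0
    · have hev : g =ᶠ[nhds t] fun _ => f (3/2) := by
        filter_upwards [Ioi_mem_nhds h2] with u hu using hgR u (le_of_lt hu)
      have h0 : HasDerivAt g 0 t :=
        (hasDerivAt_const t (f (3/2))).congr_of_eventuallyEq hev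
      have hwt : w t = 0 := by
        have hπt : (3/2:ℝ) ≤ π t := by
          simp only [hπdef]
          exact le_max_of_le_right (le_min h2.le (by norm_num))
        funext k
        simp only [hwdef, hvdef, Pi.zero_apply]
        rw [chi_zero_right hπt]
        ring
      rw [hwt]
      exact h0
  have hgC1 : ContDiff ℝ 1 g := by
    have hgdiff : Differentiable ℝ g := fun t => (hgd t).differentiableAt
    have hgcont : Continuous g := hgdiff.continuous
    have hπcont : Continuous π := continuous_const.max (continuous_id.min continuous_const)
    have hccont : Continuous c := by
      rw [hcdef]
      exact continuous_const.add ((continuous_const.mul continuous_id).smul continuous_const)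
    rw [contDiff_one_iff_deriv]
    refine ⟨hgdiff, ?_⟩
    have hderiv_eq : deriv g = w := funext fun t => (hgd t).deriv
    rw [hderiv_eq]
    refine continuous_pi fun k => ?_
    refine Continuous.neg ?_
    refine ((chi_cont.comp hπcont).mul continuous_const).mul ?_
    refine continuous_finset_sum _ fun j _ => ?_
    refine (((continuous_apply j).comp hgcont)).mul ?_
    exact (continuous_apply k).comp (((continuous_apply j).comp
      ((continuous_apply i₀).comp (hΓ.comp (hccont.comp hπcont)))))
  have hc_eq : c = fun s : ℝ => x + s • (ε • e) := by
    funext s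
    simp only [hcdef, smul_smul, mul_comm]
  have hcC1 : ContDiff ℝ 1 c := by
    rw [hc_eq]
    exact contDiff_const.add (contDiff_id.smul contDiff_const)
  have hci : ∀ t, HasDerivAt c (ε • e) t := by
    intro t
    have h1 : HasDerivAt (fun s : ℝ => s • (ε • e)) ((1:ℝ) • (ε • e)) t :=
      (hasDerivAt_id t).smul_const _
    rw [one_smul] at h1
    have h2 := h1.const_add x
    rw [hc_eq]
    exact h2
  have hne : ∀ t ∈ Icc (0:ℝ) 1, g t ≠ 0 := by
    intro t ht h0
    have hmem : t ∈ Icc (-1:ℝ) 2 := ⟨by linarith [ht.1], by linarith [ht.2]⟩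
    have hb := hfball t hmem
    rw [← hgf t hmem, h0, Metric.mem_closedBall, dist_zero_left] at hb
    rw [hRdef] at hb
    linarith
  have hpar : ∀ t ∈ Icc (0:ℝ) 1, ∀ k, deriv (fun s => g s k) t =
      - ∑ i, ∑ j, deriv (fun s => c s i) t * g t j * Γ (c t) i j k := by
    intro t ht k
    have hmem : t ∈ Icc (-1:ℝ) 2 := ⟨by linarith [ht.1], by linarith [ht.2]⟩
    have hgk : deriv (fun s => g s k) t = w t k := (hasDerivAt_pi.mp (hgd t) k).deriv
    have hck : ∀ i, deriv (fun s => c s i) t = ε * e i := by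
      intro i
      have h := (hasDerivAt_pi.mp (hci t) i).deriv
      rw [h, Pi.smul_apply, smul_eq_mul]
    rw [hgk]
    simp only [hck]
    have hRHS : ∑ i, ∑ j, (ε * e i) * g t j * Γ (c t) i j k
        = ∑ j, ε * (g t j * Γ (c t) i₀ j k) := by
      rw [Finset.sum_eq_single i₀]
      · refine Finset.sum_congr rfl fun j _ => ?_
        rw [he, Pi.single_eq_same]
        ring
      · intro i _ hi
        have h0 : e i = 0 := by rw [he]; exact Pi.single_eq_of_ne hi 1
        simp [h0]
      · intro h; exact absurd (Finset.mem_univ i₀) h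
    rw [hRHS]
    simp only [hwdef, hvdef, hπ_eq t hmem, chi_one ht.1 ht.2, one_mul]
    rw [Finset.mul_sum]
  have hconst := hpres c g hcC1 hgC1 hne hpar
  have hc0 : c 0 = x := by simp [hcdef]
  have hg0 : g 0 = y := by
    simp only [hgdef]
    rw [hπ_eq 0 (by norm_num)]
    exact hf0
  -- derivative of φ at 0 vanishes
  have hw0 : w 0 = fun k => -(ε * ∑ j, y j * Γ x i₀ j k) := by
    funext k
    have hπ0 : π 0 = 0 := hπ_eq 0 (by norm_num)
    simp only [hwdef, hvdef, hπ0, hg0, hc0]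
    rw [chi_one le_rfl zero_le_one, one_mul]
  have hD0 : (fderiv ℝ F (x, y)) (ε • e, w 0) = 0 := by
    have hne0 : g 0 ≠ 0 := hne 0 (by norm_num)
    have hφ := hasDerivAt_comp_F F hF c g 0 (ε • e) (w 0) (hci 0) (hgd 0) hne0
    rw [hc0, hg0] at hφ
    have hconst0 : ∀ u ∈ Icc (0:ℝ) 1, F (c u, g u) = F (c 0, g 0) := fun u hu =>
      hconst u hu 0 (by norm_num)
    have h2 : HasDerivWithinAt (fun s => F (c s, g s)) 0 (Icc (0:ℝ) 1) 0 :=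
      (hasDerivWithinAt_const (0:ℝ) (Icc (0:ℝ) 1) (F (c 0, g 0))).congr hconst0
        (hconst0 0 (by norm_num))
    have huniq : UniqueDiffWithinAt ℝ (Icc (0:ℝ) 1) 0 :=
      (uniqueDiffOn_Icc one_pos) 0 (by norm_num)
    have e1 := (hφ.hasDerivWithinAt (s := Icc (0:ℝ) 1)).derivWithin huniq
    have e2 := h2.derivWithin huniq
    rw [← e1, e2]
  -- expand
  have hexp : (fderiv ℝ F (x, y)) (ε • e, w 0)
      = ε * (pdx F x y i₀ - ∑ k, ∑ j, y j * Γ x i₀ j k * pdy F x y k) := by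
    unfold pdx pdy
    rw [clm_expand]
    have h1 : ∑ i, (ε • e) i * (fderiv ℝ F (x, y)) (Pi.single i 1, 0)
        = ε * (fderiv ℝ F (x, y)) (Pi.single i₀ 1, 0) := by
      rw [Finset.sum_eq_single i₀]
      · rw [Pi.smul_apply, smul_eq_mul, he, Pi.single_eq_same, mul_one]
      · intro i _ hi
        have h0 : e i = 0 := by rw [he]; exact Pi.single_eq_of_ne hi 1
        simp [h0]
      · intro h; exact absurd (Finset.mem_univ i₀) h
    have h2 : ∑ k, (w 0) k * (fderiv ℝ F (x, y)) (0, Pi.single k 1)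
        = -(ε * ∑ k, ∑ j, y j * Γ x i₀ j k * (fderiv ℝ F (x, y)) (0, Pi.single k 1)) := by
      rw [hw0, Finset.mul_sum, ← Finset.sum_neg_distrib]
      refine Finset.sum_congr rfl fun k _ => ?_
      rw [neg_mul, mul_assoc, Finset.sum_mul]
    rw [h1, h2]
    ring
  rw [hexp] at hD0
  have := mul_eq_zero.mp hD0
  rcases this with h | h
  · exact absurd h (ne_of_gt hε0)
  · rw [Finset.sum_comm] at h
    exact h

/-- Parallel transports with respect to `Γ` preserve the Finslerian length of tangent
vectors if and only if `∂F/∂xⁱ − Σ_{j,k} yʲ·Γᵏᵢⱼ·∂F/∂yᵏ = 0` holds for `y ≠ 0`. -/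
theorem parallel_preserves_iff_compatible {n : ℕ}
    (F : (Fin n → ℝ) × (Fin n → ℝ) → ℝ)
    (hF : ContDiffOn ℝ 1 F {p : (Fin n → ℝ) × (Fin n → ℝ) | p.2 ≠ 0})
    (Γ : (Fin n → ℝ) → Fin n → Fin n → Fin n → ℝ)
    (hΓ : Continuous Γ) :
    (∀ c X : ℝ → Fin n → ℝ, ContDiff ℝ 1 c → ContDiff ℝ 1 X →
        (∀ t ∈ Set.Icc (0 : ℝ) 1, X t ≠ 0) →
        (∀ t ∈ Set.Icc (0 : ℝ) 1, ∀ k, deriv (fun s => X s k) t =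
          - ∑ i, ∑ j, deriv (fun s => c s i) t * X t j * Γ (c t) i j k) →
        ∀ s ∈ Set.Icc (0 : ℝ) 1, ∀ t ∈ Set.Icc (0 : ℝ) 1, F (c s, X s) = F (c t, X t)) ↔
      (∀ x y : Fin n → ℝ, y ≠ 0 → ∀ i,
        pdx F x y i - ∑ j, ∑ k, y j * Γ x i j k * pdy F x y k = 0) := by
  exact ⟨fun hpres => hard_dir F hF Γ hΓ hpres, fun hcomp => easy_dir F hF Γ hcomp⟩
end

section
/- Let n ≥ 2 and let F : ℝⁿ → ℝ be positively 1-homogeneous, positive on nonzero vectors, and continuously differentiable on ℝⁿ \ {0}. Fix a nonzero v ∈ ℝⁿ which is not a vertical contact point of F and the Euclidean norm, fix real numbers c₁, …, cₙ, and suppose the set A(v) = { T torsion-type tensor : cᵢ + ⟨T, σᵢ(v)⟩ = 0 for all i = 1,…,n } is nonempty. Then A(v) is an affine subspace of the space of torsion-type tensors of dimension n·binom(n,2) − n. -/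
open Finset

/-- The inner product `⟨T, σᵢ(v)⟩ = Σ_{a<b} Σ_k T^k_{ab}·σ_{k;i}^{ab}(v)` of a torsion-type
tensor (written `T a b k` for `T^k_{ab}`) with the tensor `σᵢ(v)`. -/
noncomputable def ipSigma {n : ℕ} (F : EuclideanSpace ℝ (Fin n) → ℝ)
    (v : EuclideanSpace ℝ (Fin n)) (T : Fin n → Fin n → Fin n → ℝ) (i : Fin n) : ℝ :=
  ∑ a, ∑ b, ∑ k, if a < b then T a b k * sigmaT F v a b k i else 0

lemma v_decomp {n : ℕ} (v : EuclideanSpace ℝ (Fin n)) :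
    v = ∑ r, v r • EuclideanSpace.single r (1:ℝ) := by
  ext j
  have hs : ∀ (s : Finset (Fin n)) (f : Fin n → EuclideanSpace ℝ (Fin n)),
      (∑ x ∈ s, f x) j = ∑ x ∈ s, f x j := by
    intro s f
    induction s using Finset.induction with
    | empty => rfl
    | @insert a s h ih => rw [Finset.sum_insert h, Finset.sum_insert h, ← ih]; rfl
  rw [hs]
  simp [EuclideanSpace.single_apply]

lemma apply_decomp {n : ℕ} (L : EuclideanSpace ℝ (Fin n) →L[ℝ] ℝ)
    (v : EuclideanSpace ℝ (Fin n)) :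
    L v = ∑ r, v r * L (EuclideanSpace.single r (1:ℝ)) := by
  conv_lhs => rw [v_decomp v]
  rw [map_sum]
  simp [smul_eq_mul]

lemma euler {n : ℕ} (F : EuclideanSpace ℝ (Fin n) → ℝ)
    (hhom : ∀ t : ℝ, 0 < t → ∀ v, F (t • v) = t * F v)
    (hdiff : ContDiffOn ℝ 1 F {(0 : EuclideanSpace ℝ (Fin n))}ᶜ)
    (v : EuclideanSpace ℝ (Fin n)) (hv : v ≠ 0) :
    ∑ r, v r * pd F v r = F v := by
  have hvmem : v ∈ ({(0 : EuclideanSpace ℝ (Fin n))}ᶜ : Set _) := by simpa using hv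
  have hopen : IsOpen ({(0 : EuclideanSpace ℝ (Fin n))}ᶜ : Set _) := isOpen_compl_singleton
  have hdF : DifferentiableAt ℝ F v :=
    ((hdiff v hvmem).contDiffAt (hopen.mem_nhds hvmem)).differentiableAt one_ne_zero
  have h1 : HasDerivAt (fun t : ℝ => F (t • v)) (fderiv ℝ F v v) 1 := by
    have hs : HasDerivAt (fun t : ℝ => t • v) v 1 := by
      simpa using (hasDerivAt_id (1:ℝ)).smul_const v
    have hF1 : HasFDerivAt F (fderiv ℝ F v) ((1:ℝ) • v) := by
      rw [one_smul]; exact hdF.hasFDerivAt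
    exact hF1.comp_hasDerivAt (x := (1:ℝ)) hs
  have h2 : HasDerivAt (fun t : ℝ => F (t • v)) (F v) 1 := by
    have hg : HasDerivAt (fun t : ℝ => t * F v) (F v) 1 := by
      simpa using (hasDerivAt_id (1:ℝ)).mul_const (F v)
    have hev : (fun t : ℝ => t * F v) =ᶠ[nhds (1:ℝ)] fun t : ℝ => F (t • v) := by
      filter_upwards [isOpen_Ioi.mem_nhds (by norm_num : (1:ℝ) ∈ Set.Ioi (0:ℝ))] with t ht
      exact (hhom t ht v).symm
    exact hg.congr_of_eventuallyEq hev.symm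
  have hEq : fderiv ℝ F v v = F v := h1.unique h2
  rw [← hEq, apply_decomp]
  rfl

lemma M_ne_zero {n : ℕ} (F : EuclideanSpace ℝ (Fin n) → ℝ)
    (hhom : ∀ t : ℝ, 0 < t → ∀ v, F (t • v) = t * F v)
    (hdiff : ContDiffOn ℝ 1 F {(0 : EuclideanSpace ℝ (Fin n))}ᶜ)
    (v : EuclideanSpace ℝ (Fin n)) (hv : v ≠ 0)
    (hnvc : ¬ ∀ r, pd F v r = (F v / ‖v‖ ^ 2) * v r) :
    ∃ p q, v p * pd F v q - v q * pd F v p ≠ 0 := by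
  by_contra h
  push_neg at h
  apply hnvc
  obtain ⟨s, hs⟩ : ∃ s, v s ≠ 0 := by
    by_contra h'
    push_neg at h'
    exact hv (by ext j; simpa using h' j)
  have hmu : ∀ r, pd F v r = (pd F v s / v s) * v r := by
    intro r
    have := h s r
    field_simp
    nlinarith [h s r]
  have hnorm : ‖v‖ ^ 2 = ∑ r, v r * v r := by
    rw [EuclideanSpace.norm_eq]
    rw [Real.sq_sqrt (by positivity)]
    congr 1; ext r; rw [Real.norm_eq_abs, sq_abs]; ring
  have heu := euler F hhom hdiff v hv
  have hFv : F v = (pd F v s / v s) * ‖v‖ ^ 2 := by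
    rw [hnorm, ← heu, Finset.mul_sum]
    congr 1; ext r
    rw [hmu r]; ring
  intro r
  rw [hmu r, hFv]
  have hn2 : ‖v‖ ^ 2 ≠ 0 := by
    have : ‖v‖ ≠ 0 := by simpa using hv
    positivity
  field_simp

section Alg
variable {n : ℕ} (F : EuclideanSpace ℝ (Fin n) → ℝ) (v : EuclideanSpace ℝ (Fin n))

lemma ipSigma_eq (T : Fin n → Fin n → Fin n → ℝ) (i : Fin n) :
    ipSigma F v T i
      = ∑ a, ∑ b, ∑ k, T a b k * (if a < b then sigmaT F v a b k i else 0) := by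
  unfold ipSigma
  refine Finset.sum_congr rfl fun a _ => Finset.sum_congr rfl fun b _ =>
    Finset.sum_congr rfl fun k _ => ?_
  split <;> simp

lemma ipSigma_add (S T : Fin n → Fin n → Fin n → ℝ) (i : Fin n) :
    ipSigma F v (S + T) i = ipSigma F v S i + ipSigma F v T i := by
  unfold ipSigma
  rw [← Finset.sum_add_distrib]
  refine Finset.sum_congr rfl fun a _ => ?_
  rw [← Finset.sum_add_distrib]
  refine Finset.sum_congr rfl fun b _ => ?_
  rw [← Finset.sum_add_distrib]
  refine Finset.sum_congr rfl fun k _ => ?_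
  split <;> simp [add_mul]

lemma ipSigma_smul (c : ℝ) (T : Fin n → Fin n → Fin n → ℝ) (i : Fin n) :
    ipSigma F v (c • T) i = c * ipSigma F v T i := by
  unfold ipSigma
  rw [Finset.mul_sum]
  refine Finset.sum_congr rfl fun a _ => ?_
  rw [Finset.mul_sum]
  refine Finset.sum_congr rfl fun b _ => ?_
  rw [Finset.mul_sum]
  refine Finset.sum_congr rfl fun k _ => ?_
  split <;> simp [mul_assoc]

noncomputable def Phi : (Fin n → Fin n → Fin n → ℝ) →ₗ[ℝ] (Fin n → ℝ) where
  toFun T i := ipSigma F v T i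
  map_add' S T := funext fun i => ipSigma_add F v S T i
  map_smul' c T := funext fun i => ipSigma_smul F v c T i

def Wsub (n : ℕ) : Submodule ℝ (Fin n → Fin n → Fin n → ℝ) where
  carrier := {S | ∀ a b k, S a b k = - S b a k}
  add_mem' := by
    intro S T hS hT a b k
    simp only [Pi.add_apply, hS a b k, hT a b k]; ring
  zero_mem' := by intro a b k; simp
  smul_mem' := by
    intro c S hS a b k
    simp only [Pi.smul_apply, hS a b k, smul_eq_mul]; ring

lemma mem_Wsub {S : Fin n → Fin n → Fin n → ℝ} :
    S ∈ Wsub n ↔ ∀ a b k, S a b k = - S b a k := Iff.rfl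

def Etensor (p q k : Fin n) : Fin n → Fin n → Fin n → ℝ := fun a b m =>
  (if a = p then (1:ℝ) else 0) * (if b = q then 1 else 0) * (if m = k then 1 else 0)
  - (if a = q then (1:ℝ) else 0) * (if b = p then 1 else 0) * (if m = k then 1 else 0)

lemma Etensor_mem (p q k : Fin n) : Etensor p q k ∈ Wsub n := by
  intro a b m
  simp only [Etensor]; ring

lemma sigmaT_antisym (a b k i : Fin n) :
    sigmaT F v b a k i = - sigmaT F v a b k i := by
  simp only [sigmaT]; ring

lemma collapse {f : Fin n → Fin n → Fin n → ℝ} (p q k : Fin n) :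
    (∑ a, ∑ b, ∑ m, (if a = p then (1:ℝ) else 0) * ((if b = q then (1:ℝ) else 0)
      * ((if m = k then (1:ℝ) else 0) * f a b m))) = f p q k := by
  rw [Fintype.sum_eq_single p (fun x hx => by simp [hx])]
  simp only [if_pos rfl, one_mul]
  rw [Fintype.sum_eq_single q (fun x hx => by simp [hx])]
  simp only [if_pos rfl, one_mul]
  rw [Fintype.sum_eq_single k (fun x hx => by simp [hx])]
  simp

lemma ipSigma_E {p q : Fin n} (hpq : p ≠ q) (k i : Fin n) :
    ipSigma F v (Etensor p q k) i = sigmaT F v p q k i := by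
  rw [ipSigma_eq]
  have expand : ∀ a b m : Fin n,
      Etensor p q k a b m * (if a < b then sigmaT F v a b m i else 0)
      = (if a = p then (1:ℝ) else 0) * ((if b = q then (1:ℝ) else 0)
          * ((if m = k then (1:ℝ) else 0) * (if a < b then sigmaT F v a b m i else 0)))
        - (if a = q then (1:ℝ) else 0) * ((if b = p then (1:ℝ) else 0)
          * ((if m = k then (1:ℝ) else 0) * (if a < b then sigmaT F v a b m i else 0))) := by
    intro a b m
    simp only [Etensor]; ring
  simp only [expand, Finset.sum_sub_distrib]
  rw [collapse p q k, collapse q p k]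
  rcases hpq.lt_or_gt with h | h
  · rw [if_pos h, if_neg h.asymm, sub_zero]
  · rw [if_neg h.asymm, if_pos h, zero_sub, sigmaT_antisym, neg_neg]

lemma single_p_mem {p q : Fin n} (hne : p ≠ q)
    (hpq : v p * pd F v q - v q * pd F v p ≠ 0) :
    Pi.single p (1:ℝ) ∈ LinearMap.range ((Phi F v).domRestrict (Wsub n)) := by
  have hmem : (fun i => sigmaT F v p q p i)
      ∈ LinearMap.range ((Phi F v).domRestrict (Wsub n)) :=
    ⟨⟨Etensor p q p, Etensor_mem p q p⟩, funext fun i => ipSigma_E F v hne p i⟩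
  have key : ((v p * pd F v q - v q * pd F v p)⁻¹) • (fun i => sigmaT F v p q p i)
      = Pi.single p (1:ℝ) := by
    funext i
    simp only [Pi.smul_apply, smul_eq_mul, sigmaT, Pi.single_apply]
    by_cases h2 : i = p
    · by_cases h3 : i = q
      · exact absurd (h2.symm.trans h3) hne
      · simp only [h2, h3, if_true, if_false]
        field_simp
        ring
    · by_cases h3 : i = q
      · simp only [h2, h3, hne, hne.symm, if_true, if_false]
        ring
      · simp only [h2, h3, if_false]
        ring
  exact key ▸ Submodule.smul_mem _ _ hmem

lemma single_q_mem {p q : Fin n} (hne : p ≠ q)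
    (hpq : v p * pd F v q - v q * pd F v p ≠ 0) :
    Pi.single q (1:ℝ) ∈ LinearMap.range ((Phi F v).domRestrict (Wsub n)) := by
  have hmem : (fun i => sigmaT F v p q q i)
      ∈ LinearMap.range ((Phi F v).domRestrict (Wsub n)) :=
    ⟨⟨Etensor p q q, Etensor_mem p q q⟩, funext fun i => ipSigma_E F v hne q i⟩
  have key : ((v p * pd F v q - v q * pd F v p)⁻¹) • (fun i => sigmaT F v p q q i)
      = Pi.single q (1:ℝ) := by
    funext i
    simp only [Pi.smul_apply, smul_eq_mul, sigmaT, Pi.single_apply]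
    by_cases h2 : i = p
    · by_cases h3 : i = q
      · exact absurd (h2.symm.trans h3) hne
      · simp only [h2, h3, hne, hne.symm, if_true, if_false]
        ring
    · by_cases h3 : i = q
      · simp only [h2, h3, if_true, if_false]
        field_simp
        ring
      · simp only [h2, h3, if_false]
        ring
  exact key ▸ Submodule.smul_mem _ _ hmem

lemma range_top (hM : ∃ p q : Fin n, v p * pd F v q - v q * pd F v p ≠ 0) :
    LinearMap.range ((Phi F v).domRestrict (Wsub n)) = ⊤ := by
  obtain ⟨p, q, hpq⟩ := hM
  have hne : p ≠ q := by rintro rfl; simp at hpq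
  have hsp := single_p_mem F v hne hpq
  have hsq := single_q_mem F v hne hpq
  have hj : ∀ j : Fin n, Pi.single j (1:ℝ)
      ∈ LinearMap.range ((Phi F v).domRestrict (Wsub n)) := by
    intro j
    have hmem : (fun i => sigmaT F v p q j i)
        ∈ LinearMap.range ((Phi F v).domRestrict (Wsub n)) :=
      ⟨⟨Etensor p q j, Etensor_mem p q j⟩, funext fun i => ipSigma_E F v hne j i⟩
    have key : (Pi.single j (1:ℝ) : Fin n → ℝ)
        = ((2:ℝ) / (v p * pd F v q - v q * pd F v p)) • (fun i => sigmaT F v p q j i)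
          - ((v j * pd F v q - v q * pd F v j) / (v p * pd F v q - v q * pd F v p))
              • (Pi.single p (1:ℝ) : Fin n → ℝ)
          + ((v j * pd F v p - v p * pd F v j) / (v p * pd F v q - v q * pd F v p))
              • (Pi.single q (1:ℝ) : Fin n → ℝ) := by
      funext i
      simp only [Pi.add_apply, Pi.sub_apply, Pi.smul_apply, smul_eq_mul, sigmaT,
        Pi.single_apply]
      split_ifs with h1 h2 h3 h2 h3 h3 h3 <;>
        first
          | exact absurd (‹i = p›.symm.trans ‹i = q›) hne
          | (field_simp; ring)
          | field_simp
          | ring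
    rw [key]
    exact Submodule.add_mem _
      (Submodule.sub_mem _ (Submodule.smul_mem _ _ hmem) (Submodule.smul_mem _ _ hsp))
      (Submodule.smul_mem _ _ hsq)
  rw [eq_top_iff]
  rintro x -
  have hx : x = ∑ j, x j • (Pi.single j (1:ℝ) : Fin n → ℝ) := by
    funext i
    rw [Finset.sum_apply]
    simp [Pi.single_apply]
  rw [hx]
  exact Submodule.sum_mem _ fun j _ => Submodule.smul_mem _ _ (hj j)

lemma card_lt_pairs : Fintype.card {p : Fin n × Fin n // p.1 < p.2} = n.choose 2 := by
  rw [Fintype.card_congr (Equiv.subtypeProdEquivSigmaSubtype (· < · : Fin n → Fin n → Prop))]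
  rw [Fintype.card_sigma]
  have h1 : ∀ a : Fin n, Fintype.card {b : Fin n // a < b} = n - 1 - a := by
    intro a
    rw [Fintype.card_subtype]
    have : Finset.filter (fun b => a < b) Finset.univ = Finset.Ioi a :=
      Finset.filter_lt_eq_Ioi
    rw [this, Fin.card_Ioi]
  calc (∑ a : Fin n, Fintype.card {b : Fin n // a < b})
      = ∑ a : Fin n, (n - 1 - (a : ℕ)) := Finset.sum_congr rfl fun a _ => h1 a
    _ = ∑ i ∈ Finset.range n, (n - 1 - i) := Fin.sum_univ_eq_sum_range _ n
    _ = ∑ i ∈ Finset.range n, i := Finset.sum_range_reflect id n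
    _ = n.choose 2 := by rw [Finset.sum_range_id, Nat.choose_two_right]

noncomputable def Wequiv (n : ℕ) :
    Wsub n ≃ₗ[ℝ] ({p : Fin n × Fin n // p.1 < p.2} × Fin n → ℝ) := by
  refine LinearEquiv.ofLinear
    { toFun := fun S x => (S : Fin n → Fin n → Fin n → ℝ) x.1.1.1 x.1.1.2 x.2
      map_add' := fun S T => rfl
      map_smul' := fun c S => rfl }
    { toFun := fun f => ⟨fun a b k =>
        if h : a < b then f (⟨(a, b), h⟩, k)
        else if h' : b < a then - f (⟨(b, a), h'⟩, k) else 0, ?_⟩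
      map_add' := fun f g => ?_
      map_smul' := fun c f => ?_ } ?_ ?_
  · intro a b k
    dsimp only
    rcases lt_trichotomy a b with h | h | h
    · rw [dif_pos h, dif_neg h.asymm, dif_pos h, neg_neg]
    · subst h
      simp [lt_irrefl]
    · rw [dif_neg h.asymm, dif_pos h, dif_pos h]
  · ext a b k
    show (if h : a < b then _ else _) = _
    by_cases h : a < b
    · simp [h]
    · by_cases h' : b < a <;> simp [h, h']; ring
  · ext a b k
    show (if h : a < b then _ else _) = _
    by_cases h : a < b
    · simp [h]
    · by_cases h' : b < a <;> simp [h, h']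
  · ext f x
    obtain ⟨⟨⟨a, b⟩, h⟩, k⟩ := x
    simp [h]
  · ext S a b k
    simp only [LinearMap.coe_comp, Function.comp_apply, LinearMap.coe_mk, AddHom.coe_mk,
      LinearMap.id_coe, id_eq]
    rcases lt_trichotomy a b with h | h | h
    · rw [dif_pos h]
    · subst h
      rw [dif_neg (lt_irrefl a), dif_neg (lt_irrefl a)]
      have := S.2 a a k
      linarith
    · rw [dif_neg h.asymm, dif_pos h]
      have := S.2 a b k
      rw [this]

lemma finrank_Wsub : Module.finrank ℝ (Wsub n) = n * n.choose 2 := by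
  rw [(Wequiv n).finrank_eq, Module.finrank_fintype_fun_eq_card, Fintype.card_prod,
    card_lt_pairs, Fintype.card_fin, Nat.mul_comm]



/-- If `v ≠ 0` is not a vertical contact point and the solution set
`A(v) = {T : cᵢ + ⟨T, σᵢ(v)⟩ = 0 for all i}` of the compatibility system with reference
element `v` is nonempty, then `A(v)` is an affine subspace of the space of torsion-type
tensors of dimension `n·binom(n,2) − n`. -/
theorem reference_affine_subspace_dim {n : ℕ} (hn : 2 ≤ n)
    (F : EuclideanSpace ℝ (Fin n) → ℝ)
    (hhom : ∀ t : ℝ, 0 < t → ∀ v, F (t • v) = t * F v)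
    (hpos : ∀ v : EuclideanSpace ℝ (Fin n), v ≠ 0 → 0 < F v)
    (hdiff : ContDiffOn ℝ 1 F {(0 : EuclideanSpace ℝ (Fin n))}ᶜ)
    (v : EuclideanSpace ℝ (Fin n)) (hv : v ≠ 0)
    (hnvc : ¬ ∀ r, pd F v r = (F v / ‖v‖ ^ 2) * v r)
    (c : Fin n → ℝ)
    (A : Set (Fin n → Fin n → Fin n → ℝ))
    (hA : A = {T | (∀ a b k, T a b k = - T b a k) ∧ ∀ i, c i + ipSigma F v T i = 0})
    (hne : A.Nonempty) :
    ∃ H : Submodule ℝ (Fin n → Fin n → Fin n → ℝ),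
      (H : Set (Fin n → Fin n → Fin n → ℝ)) =
        {S | (∀ a b k, S a b k = - S b a k) ∧ ∀ i, ipSigma F v S i = 0} ∧
      Module.finrank ℝ H = n * n.choose 2 - n ∧
      ∃ T0 ∈ A, A = (fun S => T0 + S) '' (H : Set (Fin n → Fin n → Fin n → ℝ)) := by
  have hM : ∃ p q : Fin n, v p * pd F v q - v q * pd F v p ≠ 0 :=
    M_ne_zero F hhom hdiff v hv hnvc
  refine ⟨Wsub n ⊓ LinearMap.ker (Phi F v), ?_, ?_, ?_⟩
  · ext S
    simp only [SetLike.mem_coe, Submodule.mem_inf, LinearMap.mem_ker, Set.mem_setOf_eq,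
      mem_Wsub]
    have hPhi : Phi F v S = fun i => ipSigma F v S i := rfl
    rw [hPhi, funext_iff]
    simp
  · have hrt := range_top F v hM
    have h1 := LinearMap.finrank_range_add_finrank_ker ((Phi F v).domRestrict (Wsub n))
    rw [hrt, finrank_top, Module.finrank_fintype_fun_eq_card, Fintype.card_fin,
      finrank_Wsub] at h1
    have h2 : Module.finrank ℝ ↥(LinearMap.ker ((Phi F v).domRestrict (Wsub n)))
        = Module.finrank ℝ ↥(Wsub n ⊓ LinearMap.ker (Phi F v)) := by
      rw [LinearMap.ker_domRestrict]
      have h3 := Submodule.finrank_map_subtype_eq (Wsub n)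
        (Submodule.comap (Wsub n).subtype (LinearMap.ker (Phi F v)))
      rw [Submodule.map_comap_subtype] at h3
      exact h3.symm
    rw [h2] at h1
    omega
  · obtain ⟨T0, hT0⟩ := hne
    refine ⟨T0, hT0, ?_⟩
    subst hA
    obtain ⟨hT0a, hT0c⟩ := hT0
    ext T
    simp only [Set.mem_setOf_eq, Set.mem_image, SetLike.mem_coe, Submodule.mem_inf,
      LinearMap.mem_ker]
    constructor
    · rintro ⟨hTa, hTc⟩
      refine ⟨T - T0, ⟨?_, ?_⟩, by abel⟩
      · intro a b k
        simp only [Pi.sub_apply, hTa a b k, hT0a a b k]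
        ring
      · funext i
        have h4 : (Phi F v) (T - T0) i = (Phi F v) T i - (Phi F v) T0 i := by
          rw [map_sub]; rfl
        rw [h4]
        show ipSigma F v T i - ipSigma F v T0 i = (0 : Fin n → ℝ) i
        have := hTc i
        have := hT0c i
        simp only [Pi.zero_apply]
        linarith
    · rintro ⟨S, ⟨hSa, hSk⟩, rfl⟩
      constructor
      · intro a b k
        simp only [Pi.add_apply, hT0a a b k, hSa a b k]
        ring
      · intro i
        rw [ipSigma_add F v T0 S i]
        have h5 : ipSigma F v S i = 0 := by
          have : (Phi F v) S i = (0 : Fin n → ℝ) i := by rw [hSk]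
          exact this
        rw [h5]
        have := hT0c i
        linarith
end Alg
end
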